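/- The function s ↦ ∑_{n=1}^∞ (log n / n)^s, defined for real s > 1, satisfies lim_{s→1+} (s−1)² ∑_{n=1}^∞ (log n / n)^s = 1. -/

import Mathlib

open Filter Set MeasureTheory Topology

namespace ZetaLogAux

noncomputable def g (s t : ℝ) : ℝ := (Real.log t / t) ^ s

lemma base_nonneg {t : ℝ} (ht : 1 ≤ t) : 0 ≤ Real.log t / t :=
  div_nonneg (Real.log_nonneg ht) (by linarith)

lemma g_nonneg {s t : ℝ} (ht : 1 ≤ t) : 0 ≤ g s t :=
  Real.rpow_nonneg (base_nonneg ht) s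

lemma base_le_one {t : ℝ} (ht : 1 ≤ t) : Real.log t / t ≤ 1 := by
  rw [div_le_one (by linarith)]
  linarith [Real.log_le_sub_one_of_pos (show (0:ℝ) < t by linarith)]

lemma g_le_one {s t : ℝ} (hs : 0 ≤ s) (ht : 1 ≤ t) : g s t ≤ 1 :=
  Real.rpow_le_one (base_nonneg ht) (base_le_one ht) hs

lemma g_antitoneOn {s : ℝ} (hs : 0 ≤ s) : AntitoneOn (g s) (Ici (3:ℝ)) := by
  intro x hx y hy hxy
  have he : Real.exp 1 ≤ 3 := by
    have := Real.exp_one_lt_d9; linarith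
  have hbase : Real.log y / y ≤ Real.log x / x :=
    Real.log_div_self_antitoneOn (le_trans he hx) (le_trans he hy) hxy
  exact Real.rpow_le_rpow (base_nonneg (by linarith [mem_Ici.mp hy])) hbase hs

lemma g_continuousOn {s : ℝ} (hs : 0 ≤ s) : ContinuousOn (g s) (Ici (1:ℝ)) := by
  apply ContinuousOn.rpow_const
  · exact ContinuousOn.div
      (Real.continuousOn_log.mono (fun x hx => by simp only [mem_Ici] at hx; simp; positivity))
      continuousOn_id (fun x hx => by simp only [mem_Ici] at hx; positivity)
  · exact fun x _ => Or.inr hs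

/-- integrability of `(log t / t)^s` on `[1, ∞)` for `s > 1`. -/
lemma g_integrableOn {s : ℝ} (hs : 1 < s) : IntegrableOn (g s) (Ioi (1:ℝ)) := by
  set ε : ℝ := (s - 1) / (2 * s) with hε
  have hs0 : 0 < s := by linarith
  have hεpos : 0 < ε := by exact div_pos (by linarith) (by linarith)
  have hp : -(s + 1) / 2 < -1 := by nlinarith
  have hmaj : IntegrableOn (fun t : ℝ => ε ^ (-s) * t ^ (-(s + 1) / 2)) (Ioi (1:ℝ)) :=
    (integrableOn_Ioi_rpow_of_lt hp one_pos).const_mul _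
  refine hmaj.mono' ?_ ?_
  · exact ((g_continuousOn hs0.le).mono Ioi_subset_Ici_self).aestronglyMeasurable measurableSet_Ioi
  · filter_upwards [ae_restrict_mem measurableSet_Ioi] with t ht
    have ht1 : (1:ℝ) < t := ht
    have htpos : (0:ℝ) < t := by linarith
    rw [Real.norm_eq_abs, abs_of_nonneg (g_nonneg ht1.le)]
    have h1 : Real.log t / t ≤ t ^ (ε - 1) / ε := by
      have hlog := Real.log_le_rpow_div (le_of_lt htpos) hεpos
      calc Real.log t / t ≤ (t ^ ε / ε) / t := by gcongr
          _ = t ^ (ε - 1) / ε := by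
            rw [div_div, mul_comm ε t, ← div_div, Real.rpow_sub htpos, Real.rpow_one]
    have h2 : g s t ≤ (t ^ (ε - 1) / ε) ^ s :=
      Real.rpow_le_rpow (base_nonneg ht1.le) h1 hs0.le
    calc g s t ≤ (t ^ (ε - 1) / ε) ^ s := h2
      _ = ε ^ (-s) * t ^ ((ε - 1) * s) := by
          rw [Real.div_rpow (Real.rpow_nonneg htpos.le _) hεpos.le,
            ← Real.rpow_mul htpos.le, Real.rpow_neg hεpos.le, div_eq_mul_inv, mul_comm]
      _ = ε ^ (-s) * t ^ (-(s + 1) / 2) := by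
          congr 1
          congr 1
          field_simp [hε]
          have h2s : ε * s * 2 = s - 1 := by rw [hε]; field_simp [hs0.ne']
          linarith

/-- integrability of `u^s * exp(-(s-1)u)` on `(0, ∞)`. -/
lemma g0_integrableOn {s : ℝ} (hs : 1 < s) :
    IntegrableOn (fun u : ℝ => u ^ s * Real.exp (-((s - 1) * u))) (Ioi (0:ℝ)) := by
  have hr : (0:ℝ) < s - 1 := by linarith
  have hF : IntegrableOn (fun x : ℝ => Real.exp (-x) * x ^ s) (Ioi (0:ℝ)) := by
    have := Real.GammaIntegral_convergent (show (0:ℝ) < s + 1 by linarith)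
    simpa using this
  have hInd : Integrable ((Ioi (0:ℝ)).indicator fun x => Real.exp (-x) * x ^ s) := by
    rwa [integrable_indicator_iff measurableSet_Ioi]
  have hComp : Integrable (fun x : ℝ =>
      ((Ioi (0:ℝ)).indicator fun y => Real.exp (-y) * y ^ s) ((s - 1) * x)) :=
    hInd.comp_mul_left' hr.ne'
  have hEq : ∀ x : ℝ, ((Ioi (0:ℝ)).indicator fun y => Real.exp (-y) * y ^ s) ((s - 1) * x)
      = (Ioi (0:ℝ)).indicator (fun x => Real.exp (-((s - 1) * x)) * ((s - 1) * x) ^ s) x := by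
    intro x
    by_cases hx : x ∈ Ioi (0:ℝ)
    · rw [indicator_of_mem hx, indicator_of_mem (by simp at hx ⊢; positivity)]
    · rw [indicator_of_notMem hx, indicator_of_notMem]
      simp only [mem_Ioi, not_lt] at hx ⊢
      exact mul_nonpos_of_nonneg_of_nonpos hr.le hx
  have h2 : IntegrableOn (fun x : ℝ => Real.exp (-((s - 1) * x)) * ((s - 1) * x) ^ s)
      (Ioi (0:ℝ)) := by
    rw [← integrable_indicator_iff measurableSet_Ioi]
    exact hComp.congr (Filter.Eventually.of_forall hEq)
  have h3 : IntegrableOn (fun x : ℝ =>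
      (s - 1) ^ (-s) * (Real.exp (-((s - 1) * x)) * ((s - 1) * x) ^ s)) (Ioi (0:ℝ)) :=
    h2.const_mul ((s - 1) ^ (-s))
  refine IntegrableOn.congr_fun h3 (fun x hx => ?_) measurableSet_Ioi
  have hx0 : (0:ℝ) < x := hx
  rw [Real.mul_rpow hr.le hx0.le, Real.rpow_neg hr.le]
  field_simp [(Real.rpow_pos_of_pos hr s).ne']

/-- value of the `u`-side integral. -/
lemma g0_integral {s : ℝ} (hs : 1 < s) :
    ∫ u in Ioi (0:ℝ), u ^ s * Real.exp (-((s - 1) * u))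
      = (1 / (s - 1)) ^ (s + 1) * Real.Gamma (s + 1) := by
  have := Real.integral_rpow_mul_exp_neg_mul_Ioi (show (0:ℝ) < s + 1 by linarith)
    (show (0:ℝ) < s - 1 by linarith)
  simpa using this

lemma key_eq {s : ℝ} (hs : 1 < s) {x : ℝ} (hx : 1 ≤ x) :
    ((fun u : ℝ => u ^ s * Real.exp (-((s - 1) * u))) ∘ Real.log) x * x⁻¹ = g s x := by
  have hx0 : (0:ℝ) < x := by linarith
  have hl0 : 0 ≤ Real.log x := Real.log_nonneg hx
  have hexp : Real.exp (-((s - 1) * Real.log x)) = x ^ (1 - s) := by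
    rw [Real.rpow_def_of_pos hx0]
    congr 1
    ring
  have hxx : x ^ (1 - s) * x⁻¹ = (x ^ s)⁻¹ := by
    rw [← Real.rpow_neg_one x, ← Real.rpow_add hx0, ← Real.rpow_neg hx0.le]
    congr 1
    ring
  simp only [Function.comp_apply, hexp, g]
  rw [Real.div_rpow hl0 hx0.le, mul_assoc, hxx, div_eq_mul_inv]

/-- change of variables `t = exp u`. -/
lemma g_integral {s : ℝ} (hs : 1 < s) :
    ∫ t in Ioi (1:ℝ), g s t = (1 / (s - 1)) ^ (s + 1) * Real.Gamma (s + 1) := by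
  have hs0 : (0:ℝ) < s := by linarith
  rw [← g0_integral hs]
  set g0 : ℝ → ℝ := fun u => u ^ s * Real.exp (-((s - 1) * u)) with hg0
  have himg1 : Real.log '' Ici (1:ℝ) ⊆ Ici (0:ℝ) := by
    rintro _ ⟨x, hx, rfl⟩
    exact Real.log_nonneg hx
  have himg2 : Real.log '' Ioi (1:ℝ) ⊆ Ioi (0:ℝ) := by
    rintro _ ⟨x, hx, rfl⟩
    exact Real.log_pos hx
  have hcov := MeasureTheory.integral_comp_mul_deriv_Ioi
    (f := Real.log) (f' := fun x => x⁻¹) (g := g0) (a := 1)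
    (Real.continuousOn_log.mono (fun x hx => by
      simp only [mem_Ici] at hx; simp only [mem_compl_iff, mem_singleton_iff]; positivity))
    Real.tendsto_log_atTop
    (fun x hx => (Real.hasDerivAt_log (by simp only [mem_Ioi] at hx; positivity)).hasDerivWithinAt)
    ?_ ?_ ?_
  · rw [Real.log_one] at hcov
    rw [← hcov]
    refine setIntegral_congr_fun measurableSet_Ioi (fun x hx => ?_)
    exact (key_eq hs (le_of_lt hx)).symm
  · -- continuity of g0 on log '' Ioi 1
    refine ContinuousOn.mono ?_ himg2
    apply ContinuousOn.mul
    · exact fun x hx => ((Real.continuousAt_rpow_const x s (Or.inl (ne_of_gt hx))).continuousWithinAt)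
    · exact (Real.continuous_exp.comp (continuous_const.mul continuous_id).neg).continuousOn
  · -- integrability of g0 on log '' Ici 1
    refine IntegrableOn.mono_set ?_ himg1
    rw [integrableOn_Ici_iff_integrableOn_Ioi]
    exact g0_integrableOn hs
  · -- integrability of (g0 ∘ log) x * x⁻¹ on Ici 1
    have : IntegrableOn (g s) (Ici (1:ℝ)) := by
      rw [integrableOn_Ici_iff_integrableOn_Ioi]
      exact g_integrableOn hs
    exact IntegrableOn.congr_fun this (fun x hx => (key_eq hs hx).symm) measurableSet_Ici

/-- Sum-vs-integral comparison with error 2. -/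
lemma sum_bounds {s : ℝ} (hs : 1 < s) :
    Summable (fun n : ℕ => g s ((n:ℝ) + 1)) ∧
    (∫ t in Ioi (1:ℝ), g s t) - 2 ≤ (∑' n : ℕ, g s ((n:ℝ) + 1)) ∧
    (∑' n : ℕ, g s ((n:ℝ) + 1)) ≤ (∫ t in Ioi (1:ℝ), g s t) + 2 := by
  have hs0 : (0:ℝ) < s := by linarith
  have hnn : ∀ n : ℕ, 0 ≤ g s ((n:ℝ) + 1) :=
    fun n => g_nonneg (by have := Nat.cast_nonneg (α := ℝ) n; linarith)
  have hIoi3 : IntegrableOn (g s) (Ioi (3:ℝ)) :=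
    (g_integrableOn hs).mono_set (Ioi_subset_Ioi (by norm_num))
  have hIoc13 : IntegrableOn (g s) (Ioc (1:ℝ) 3) :=
    (g_integrableOn hs).mono_set Ioc_subset_Ioi_self
  set K : ℝ := ∫ t in Ioi (3:ℝ), g s t with hK
  have hsplit : (∫ t in Ioi (1:ℝ), g s t) = (∫ t in Ioc (1:ℝ) 3, g s t) + K := by
    rw [← Ioc_union_Ioi_eq_Ioi (by norm_num : (1:ℝ) ≤ 3),
      setIntegral_union (Ioc_disjoint_Ioi le_rfl) measurableSet_Ioi hIoc13 hIoi3]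
  have hIoc_nonneg : 0 ≤ ∫ t in Ioc (1:ℝ) 3, g s t :=
    setIntegral_nonneg measurableSet_Ioc (fun x hx => g_nonneg hx.1.le)
  have hIoc_le : (∫ t in Ioc (1:ℝ) 3, g s t) ≤ 2 := by
    calc (∫ t in Ioc (1:ℝ) 3, g s t) ≤ ∫ _ in Ioc (1:ℝ) 3, (1:ℝ) := by
          refine setIntegral_mono_on hIoc13 ?_ measurableSet_Ioc
            (fun x hx => g_le_one hs0.le hx.1.le)
          exact integrableOn_const measure_Ioc_lt_top.ne
      _ = 2 := by
          simp only [setIntegral_const, smul_eq_mul, mul_one, Real.volume_Ioc]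
          rw [Real.volume_real_Ioc]
          norm_num
  have hanti : ∀ N : ℕ, AntitoneOn (g s) (Icc ((3:ℕ):ℝ) ((N:ℕ):ℝ)) := by
    intro N
    refine (g_antitoneOn hs0.le).mono ?_
    intro x hx
    simp only [mem_Icc] at hx
    simp only [mem_Ici]
    have := hx.1
    norm_num at this ⊢
    linarith
  -- upper bound on partial sums
  have hpartial : ∀ N : ℕ, 3 ≤ N →
      (∑ n ∈ Finset.range N, g s ((n:ℝ) + 1)) ≤ 2 + K := by
    intro N hN
    have hsplitsum : (∑ n ∈ Finset.range N, g s ((n:ℝ) + 1))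
        = (∑ n ∈ Finset.range 3, g s ((n:ℝ) + 1))
          + ∑ n ∈ Finset.Ico 3 N, g s ((n:ℝ) + 1) := by
      rw [Finset.range_eq_Ico]
      exact (Finset.sum_Ico_consecutive _ (Nat.zero_le 3) hN).symm
    have h3 : (∑ n ∈ Finset.range 3, g s ((n:ℝ) + 1)) ≤ 2 := by
      rw [Finset.sum_range_succ, Finset.sum_range_succ, Finset.sum_range_one]
      have h0 : g s (((0:ℕ):ℝ) + 1) = 0 := by
        norm_num [g, Real.log_one, Real.zero_rpow hs0.ne']
      have h1 : g s (((1:ℕ):ℝ) + 1) ≤ 1 := g_le_one hs0.le (by norm_num)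
      have h2 : g s (((2:ℕ):ℝ) + 1) ≤ 1 := g_le_one hs0.le (by norm_num)
      linarith
    have htail : (∑ n ∈ Finset.Ico 3 N, g s ((n:ℝ) + 1)) ≤ K := by
      have hle := AntitoneOn.sum_le_integral_Ico hN (f := g s) (hanti N)
      have hcast : (∑ i ∈ Finset.Ico 3 N, g s (((i+1 : ℕ)):ℝ))
          = ∑ n ∈ Finset.Ico 3 N, g s ((n:ℝ) + 1) := by
        refine Finset.sum_congr rfl (fun i _ => ?_)
        push_cast
        ring_nf
      rw [hcast] at hle
      refine hle.trans ?_
      rw [intervalIntegral.integral_of_le (by exact_mod_cast hN)]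
      refine setIntegral_mono_set hIoi3 ?_ ?_
      · filter_upwards [ae_restrict_mem measurableSet_Ioi] with t ht
        exact g_nonneg (by simp only [mem_Ioi] at ht; norm_num at ht ⊢; linarith)
      · refine HasSubset.Subset.eventuallyLE ?_
        intro x hx
        simp only [mem_Ioc, mem_Ioi] at hx ⊢
        norm_num at hx ⊢
        exact hx.1
    linarith
  have hpartial' : ∀ N : ℕ, (∑ n ∈ Finset.range N, g s ((n:ℝ) + 1)) ≤ 2 + K := by
    intro N
    calc (∑ n ∈ Finset.range N, g s ((n:ℝ) + 1))
        ≤ ∑ n ∈ Finset.range (N + 3), g s ((n:ℝ) + 1) :=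
          Finset.sum_le_sum_of_subset_of_nonneg
            (Finset.range_subset_range.2 (by omega)) (fun i _ _ => hnn i)
      _ ≤ 2 + K := hpartial (N + 3) (by omega)
  have hsummable : Summable (fun n : ℕ => g s ((n:ℝ) + 1)) :=
    summable_of_sum_range_le hnn hpartial'
  refine ⟨hsummable, ?_, ?_⟩
  · -- lower bound
    have hKle : K ≤ ∑' n : ℕ, g s ((n:ℝ) + 1) := by
      have htends : Tendsto (fun N : ℕ => ∫ x in (((3:ℕ):ℝ))..((N:ℕ):ℝ), g s x)
          atTop (𝓝 K) := by
        have := intervalIntegral_tendsto_integral_Ioi ((3:ℕ):ℝ)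
          (by norm_num; exact hIoi3) tendsto_natCast_atTop_atTop
        norm_num at this ⊢
        exact this
      refine le_of_tendsto htends ?_
      filter_upwards [eventually_ge_atTop 3] with N hN
      have hle := AntitoneOn.integral_le_sum_Ico hN (f := g s) (hanti N)
      refine hle.trans ?_
      have hre : (∑ x ∈ Finset.Ico 3 N, g s ((x:ℕ):ℝ))
          = ∑ i ∈ Finset.Ico 2 (N - 1), g s ((i:ℝ) + 1) := by
        rw [Finset.sum_Ico_eq_sum_range, Finset.sum_Ico_eq_sum_range]
        have hNN : N - 3 = N - 1 - 2 := by omega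
        rw [← hNN]
        refine Finset.sum_congr rfl (fun i _ => ?_)
        push_cast
        ring_nf
      rw [hre]
      exact Summable.sum_le_tsum _ (fun i _ => hnn i) hsummable
    rw [hsplit]
    linarith
  · have := Real.tsum_le_of_sum_range_le hnn hpartial'
    rw [hsplit]
    linarith

/-- The limit of `(s-1)^2 * (1/(s-1))^(s+1) * Γ(s+1)` as `s → 1⁺`. -/
lemma tendsto_main_integral :
    Tendsto (fun s : ℝ => (s - 1) ^ 2 * ((1 / (s - 1)) ^ (s + 1) * Real.Gamma (s + 1)))
      (𝓝[>] (1:ℝ)) (𝓝 1) := by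
  have hA : Tendsto (fun s : ℝ => (s - 1) ^ ((1:ℝ) - s)) (𝓝[>] (1:ℝ)) (𝓝 1) := by
    have hsub : Tendsto (fun s : ℝ => s - 1) (𝓝[>] (1:ℝ)) (𝓝[>] (0:ℝ)) := by
      apply tendsto_nhdsWithin_of_tendsto_nhds_of_eventually_within
      · have : Tendsto (fun s : ℝ => s - 1) (𝓝 (1:ℝ)) (𝓝 0) := by
          simpa using (continuous_sub_right (1:ℝ)).tendsto 1
        exact this.mono_left nhdsWithin_le_nhds
      · filter_upwards [self_mem_nhdsWithin] with s hs
        simp only [mem_Ioi] at hs ⊢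
        linarith
    have h0 : Tendsto (fun x : ℝ => Real.log x * x ^ (1:ℝ)) (𝓝[>] (0:ℝ)) (𝓝 0) :=
      tendsto_log_mul_rpow_nhdsGT_zero zero_lt_one
    have h1 : Tendsto (fun s : ℝ => Real.log (s - 1) * (s - 1) ^ (1:ℝ))
        (𝓝[>] (1:ℝ)) (𝓝 0) := h0.comp hsub
    have h1' : Tendsto (fun s : ℝ => -(Real.log (s - 1) * (s - 1) ^ (1:ℝ)))
        (𝓝[>] (1:ℝ)) (𝓝 0) := by simpa using h1.neg
    have h2 : Tendsto (fun s : ℝ => Real.exp (-(Real.log (s - 1) * (s - 1) ^ (1:ℝ))))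
        (𝓝[>] (1:ℝ)) (𝓝 1) := by
      have := (Real.continuous_exp.tendsto 0).comp h1'
      simpa [Function.comp_def] using this
    refine h2.congr' ?_
    filter_upwards [self_mem_nhdsWithin] with s hs
    simp only [mem_Ioi] at hs
    rw [Real.rpow_one, Real.rpow_def_of_pos (by linarith : (0:ℝ) < s - 1)]
    congr 1
    ring
  have hB : Tendsto (fun s : ℝ => Real.Gamma (s + 1)) (𝓝[>] (1:ℝ)) (𝓝 1) := by
    have hcont : ContinuousAt Real.Gamma 2 := by
      refine (Real.differentiableAt_Gamma (s := 2) ?_).continuousAt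
      intro m h
      have hm : (0:ℝ) ≤ (m:ℝ) := Nat.cast_nonneg m
      linarith [h]
    have hadd : Tendsto (fun s : ℝ => s + 1) (𝓝 (1:ℝ)) (𝓝 2) := by
      have h12 : (1:ℝ) + 1 = 2 := by norm_num
      simpa [h12] using (continuous_add_right (1:ℝ)).tendsto 1
    have := hcont.tendsto.comp hadd
    rw [Real.Gamma_two] at this
    exact this.mono_left nhdsWithin_le_nhds
  have hAB : Tendsto (fun s : ℝ => (s - 1) ^ ((1:ℝ) - s) * Real.Gamma (s + 1))
      (𝓝[>] (1:ℝ)) (𝓝 1) := by simpa using hA.mul hB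
  refine hAB.congr' ?_
  filter_upwards [self_mem_nhdsWithin] with s hs
  simp only [mem_Ioi] at hs
  have hr : (0:ℝ) < s - 1 := by linarith
  have key : (s - 1) ^ 2 * (1 / (s - 1)) ^ (s + 1) = (s - 1) ^ ((1:ℝ) - s) := by
    rw [one_div, Real.inv_rpow hr.le, ← Real.rpow_neg hr.le,
      ← Real.rpow_natCast (s - 1) 2, ← Real.rpow_add hr]
    norm_num
    congr 1
    ring
  rw [← key]
  ring

end ZetaLogAux

open ZetaLogAux in
/-- **Remark.** The zeta-type function `s ↦ ∑_{n=1}^∞ (log n / n)^s` (for real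
`s > 1`) satisfies `lim_{s→1+} (s-1)² ∑_{n=1}^∞ (log n / n)^s = 1`. -/
theorem tendsto_zeta_log_over_n :
    Tendsto
      (fun s : ℝ => (s - 1) ^ 2 *
        ∑' n : ℕ, (Real.log (n + 1) / (n + 1)) ^ s)
      (nhdsWithin 1 (Ioi 1)) (nhds 1) := by
  have hmain := tendsto_main_integral
  have hlow : Tendsto (fun s : ℝ => (s - 1) ^ 2 * ((1 / (s - 1)) ^ (s + 1)
      * Real.Gamma (s + 1) - 2)) (𝓝[>] (1:ℝ)) (𝓝 1) := by
    have hsq : Tendsto (fun s : ℝ => (s - 1) ^ 2) (𝓝[>] (1:ℝ)) (𝓝 0) := by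
      have : Tendsto (fun s : ℝ => (s - 1) ^ 2) (𝓝 (1:ℝ)) (𝓝 0) := by
        simpa [Pi.pow_def] using ((continuous_sub_right (1:ℝ)).pow 2).tendsto 1
      exact this.mono_left nhdsWithin_le_nhds
    have := hmain.sub (hsq.const_mul 2)
    norm_num at this
    refine this.congr (fun s => ?_)
    ring
  have hhigh : Tendsto (fun s : ℝ => (s - 1) ^ 2 * ((1 / (s - 1)) ^ (s + 1)
      * Real.Gamma (s + 1) + 2)) (𝓝[>] (1:ℝ)) (𝓝 1) := by
    have hsq : Tendsto (fun s : ℝ => (s - 1) ^ 2) (𝓝[>] (1:ℝ)) (𝓝 0) := by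
      have : Tendsto (fun s : ℝ => (s - 1) ^ 2) (𝓝 (1:ℝ)) (𝓝 0) := by
        simpa [Pi.pow_def] using ((continuous_sub_right (1:ℝ)).pow 2).tendsto 1
      exact this.mono_left nhdsWithin_le_nhds
    have := hmain.add (hsq.const_mul 2)
    norm_num at this
    refine this.congr (fun s => ?_)
    ring
  refine tendsto_of_tendsto_of_tendsto_of_le_of_le' hlow hhigh ?_ ?_
  · filter_upwards [self_mem_nhdsWithin] with s hs
    simp only [mem_Ioi] at hs
    obtain ⟨hsum, hlb, hub⟩ := sum_bounds hs
    have hJ := g_integral hs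
    have : (1 / (s - 1)) ^ (s + 1) * Real.Gamma (s + 1) - 2
        ≤ ∑' n : ℕ, (Real.log ((n:ℝ) + 1) / ((n:ℝ) + 1)) ^ s := by
      rw [← hJ]
      exact hlb
    exact mul_le_mul_of_nonneg_left this (sq_nonneg _)
  · filter_upwards [self_mem_nhdsWithin] with s hs
    simp only [mem_Ioi] at hs
    obtain ⟨hsum, hlb, hub⟩ := sum_bounds hs
    have hJ := g_integral hs
    have : (∑' n : ℕ, (Real.log ((n:ℝ) + 1) / ((n:ℝ) + 1)) ^ s)
        ≤ (1 / (s - 1)) ^ (s + 1) * Real.Gamma (s + 1) + 2 := by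
      rw [← hJ]
      exact hub
    exact mul_le_mul_of_nonneg_left this (sq_nonneg _)
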